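/- arXiv:q-alg/9503016 — 3 statements merged into one kernel-verified Lean document; each statement's English description precedes it below -/
import Mathlib

section
/- In a quasi-triangular Hopf algebra, the element u = Σ S(r²_σ) r¹_σ satisfies S²(ξ) = u ξ u^{-1} for all ξ, hence u is invertible and implements the square of the antipode. -/
set_option synthInstance.maxHeartbeats 1000000
set_option maxHeartbeats 1000000
open TensorProduct Coalgebra HopfAlgebra
namespace DrinfeldAux
variable {A : Type*} [Ring A] [HopfAlgebra ℂ A]
local notation "S°" => HopfAlgebra.antipode (R := ℂ)
local notation "μ°" => LinearMap.mul' ℂ A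

-- placeholders for already-proven defs (recompiled whole at the end)
noncomputable def psiM : A ⊗[ℂ] A →ₗ[ℂ] A :=
  μ° ∘ₗ (TensorProduct.map S° S°) ∘ₗ (TensorProduct.comm ℂ A A).toLinearMap
@[simp] lemma psiM_tmul (r r' : A) : psiM (r ⊗ₜ r') = S° r' * S° r := by simp [psiM]
noncomputable def mu4 : (A ⊗[ℂ] A) ⊗[ℂ] (A ⊗[ℂ] A) →ₗ[ℂ] A :=
  μ° ∘ₗ ((S°).rTensor A) ∘ₗ LinearMap.mul' ℂ (A ⊗[ℂ] A)
@[simp] lemma mu4_tmul (X Y : A ⊗[ℂ] A) : mu4 (X ⊗ₜ Y) = μ° ((S°).rTensor A (X * Y)) := by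
  simp [mu4]
lemma mu4_comul (y y' : A) :
    mu4 ((comul (R := ℂ) y) ⊗ₜ (comul (R := ℂ) y')) =
      (counit (R := ℂ) y * counit (R := ℂ) y') • (1 : A) := by
  rw [mu4_tmul, ← Bialgebra.comul_mul, mul_antipode_rTensor_comul_apply, Bialgebra.counit_mul,
    Algebra.algebraMap_eq_smul_one]
noncomputable def psi2 : A ⊗[ℂ] A →ₗ[ℂ] A := μ° ∘ₗ ((S°).lTensor A)
@[simp] lemma psi2_tmul (p q : A) : psi2 (p ⊗ₜ q) = p * S° q := by simp [psi2]
lemma psi2_comul (z : A) : psi2 (comul (R := ℂ) z) = counit (R := ℂ) z • (1 : A) := by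
  simpa [psi2, Algebra.algebraMap_eq_smul_one] using
    mul_antipode_lTensor_comul_apply (R := ℂ) (a := z)
noncomputable def F1lin : A ⊗[ℂ] A →ₗ[ℂ] A :=
  (TensorProduct.lid ℂ A).toLinearMap ∘ₗ (counit (R := ℂ)).rTensor A
@[simp] lemma F1lin_tmul (y z : A) : F1lin (y ⊗ₜ z) = counit (R := ℂ) y • z := by simp [F1lin]
lemma F1lin_comul (a : A) : F1lin (comul (R := ℂ) a) = a := by
  simp [F1lin, Coalgebra.rTensor_counit_comul]
noncomputable def F2lin : A ⊗[ℂ] A →ₗ[ℂ] A :=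
  (TensorProduct.rid ℂ A).toLinearMap ∘ₗ (counit (R := ℂ)).lTensor A
@[simp] lemma F2lin_tmul (y z : A) : F2lin (y ⊗ₜ z) = counit (R := ℂ) z • y := by simp [F2lin]
lemma F2lin_comul (a : A) : F2lin (comul (R := ℂ) a) = a := by
  simp [F2lin, Coalgebra.lTensor_counit_comul]
lemma antipode_one' : S° (1 : A) = 1 := by
  have h := HopfAlgebra.mul_antipode_rTensor_comul_apply (R := ℂ) (a := (1 : A))
  simpa [Algebra.TensorProduct.one_def] using h
noncomputable def sigM : A ⊗[ℂ] A →ₗ[ℂ] A := S° ∘ₗ F1lin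
@[simp] lemma sigM_tmul (y z : A) : sigM (y ⊗ₜ z) = counit (R := ℂ) y • S° z := by simp [sigM]
lemma sigM_comul (a : A) : sigM (comul (R := ℂ) a) = S° a := by simp [sigM, F1lin_comul]
noncomputable def Phi : ((A ⊗[ℂ] A) ⊗[ℂ] A) ⊗[ℂ] ((A ⊗[ℂ] A) ⊗[ℂ] A) →ₗ[ℂ] A :=
  μ° ∘ₗ (TensorProduct.map mu4 psiM) ∘ₗ
    (TensorProduct.tensorTensorTensorComm ℂ (A ⊗[ℂ] A) A (A ⊗[ℂ] A) A).toLinearMap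
lemma Phi_eval (w v : A ⊗[ℂ] A) (r r' : A) :
    Phi ((w ⊗ₜ r) ⊗ₜ (v ⊗ₜ r')) = mu4 (w ⊗ₜ v) * psiM (r ⊗ₜ r') := by simp [Phi]
noncomputable def Phi1 : (A ⊗[ℂ] A) ⊗[ℂ] (A ⊗[ℂ] A) →ₗ[ℂ] A :=
  μ° ∘ₗ (TensorProduct.map μ° psiM) ∘ₗ
    (TensorProduct.tensorTensorTensorComm ℂ A A A A).toLinearMap
@[simp] lemma Phi1_tmul (p q p' q' : A) :
    Phi1 ((p ⊗ₜ q) ⊗ₜ (p' ⊗ₜ q')) = (p * p') * (S° q' * S° q) := by simp [Phi1]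

-- NEW PART
lemma Phi1_left (p q : A) (D : A ⊗[ℂ] A) :
    Phi1 ((p ⊗ₜ q) ⊗ₜ D) = p * psi2 D * S° q := by
  induction D using TensorProduct.induction_on with
  | zero => simp
  | tmul p' q' => simp [mul_assoc]
  | add D1 D2 h1 h2 =>
    simp only [tmul_add, map_add, h1, h2, mul_add, add_mul]

lemma Phi1_comul_right (C : A ⊗[ℂ] A) (z' : A) :
    Phi1 (C ⊗ₜ comul (R := ℂ) z') = counit (R := ℂ) z' • psi2 C := by
  induction C using TensorProduct.induction_on with
  | zero => simp
  | tmul p q =>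
    rw [Phi1_left, psi2_comul]
    simp [mul_smul_comm, smul_mul_assoc]
  | add C1 C2 h1 h2 =>
    simp only [add_tmul, map_add, h1, h2, smul_add]

lemma Phi1_comul_comul (z z' : A) :
    Phi1 ((comul (R := ℂ) z) ⊗ₜ (comul (R := ℂ) z')) =
      (counit (R := ℂ) z * counit (R := ℂ) z') • (1 : A) := by
  rw [Phi1_comul_right, psi2_comul, smul_smul, mul_comm]

lemma Phi_assoc_symm (y y' : A) (w w' : A ⊗[ℂ] A) :
    Phi (((TensorProduct.assoc ℂ A A A).symm (y ⊗ₜ w)) ⊗ₜ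
        ((TensorProduct.assoc ℂ A A A).symm (y' ⊗ₜ w'))) =
      S° (y * y') * Phi1 (w ⊗ₜ w') := by
  induction w using TensorProduct.induction_on with
  | zero => simp
  | tmul p q =>
    induction w' using TensorProduct.induction_on with
    | zero => simp
    | tmul p' q' =>
      rw [TensorProduct.assoc_symm_tmul, TensorProduct.assoc_symm_tmul, Phi_eval]
      simp [Algebra.TensorProduct.tmul_mul_tmul, mul_assoc]
    | add w1 w2 h1 h2 =>
      simp only [tmul_add, map_add, h1, h2, mul_add]
  | add w1 w2 h1 h2 =>
    simp only [tmul_add, add_tmul, map_add, h1, h2, mul_add, add_mul]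

lemma Phi_rTensor_comul (C D : A ⊗[ℂ] A) :
    Phi (((comul (R := ℂ)).rTensor A C) ⊗ₜ ((comul (R := ℂ)).rTensor A D)) =
      sigM D * sigM C := by
  induction C using TensorProduct.induction_on with
  | zero => simp
  | tmul y z =>
    induction D using TensorProduct.induction_on with
    | zero => simp
    | tmul y' z' =>
      rw [LinearMap.rTensor_tmul, LinearMap.rTensor_tmul, Phi_eval, mu4_comul]
      simp [smul_mul_assoc, mul_smul_comm, smul_smul, mul_comm]
    | add D1 D2 h1 h2 =>
      simp only [tmul_add, map_add, h1, h2, mul_add, add_mul]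
  | add C1 C2 h1 h2 =>
    simp only [add_tmul, map_add, h1, h2, mul_add, add_mul]

lemma Phi_lTensor_comul (C D : A ⊗[ℂ] A) :
    Phi (((TensorProduct.assoc ℂ A A A).symm ((comul (R := ℂ)).lTensor A C)) ⊗ₜ
        ((TensorProduct.assoc ℂ A A A).symm ((comul (R := ℂ)).lTensor A D))) =
      S° (F2lin C * F2lin D) := by
  induction C using TensorProduct.induction_on with
  | zero => simp
  | tmul y z =>
    induction D using TensorProduct.induction_on with
    | zero => simp
    | tmul y' z' =>
      rw [LinearMap.lTensor_tmul, LinearMap.lTensor_tmul, Phi_assoc_symm, Phi1_comul_comul]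
      simp [smul_mul_assoc, mul_smul_comm, smul_smul, mul_comm]
    | add D1 D2 h1 h2 =>
      simp only [tmul_add, map_add, h1, h2, mul_add, map_add]
  | add C1 C2 h1 h2 =>
    simp only [add_tmul, map_add, h1, h2, mul_add, add_mul, map_add]

theorem antipode_mul (a b : A) : S° (a * b) = S° b * S° a := by
  have h1 : Phi (((comul (R := ℂ)).rTensor A (comul (R := ℂ) a)) ⊗ₜ
      ((comul (R := ℂ)).rTensor A (comul (R := ℂ) b))) = S° b * S° a := by
    rw [Phi_rTensor_comul, sigM_comul, sigM_comul]
  rw [← Coalgebra.coassoc_symm_apply, ← Coalgebra.coassoc_symm_apply (R := ℂ) (a := b),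
    Phi_lTensor_comul, F2lin_comul, F2lin_comul] at h1
  exact h1

section Main

variable {A : Type*} [Ring A] [HopfAlgebra ℂ A]
local notation "S°" => HopfAlgebra.antipode (R := ℂ)
local notation "μ°" => LinearMap.mul' ℂ A

open Algebra.TensorProduct (includeLeft includeRight)

/-- counit as an algebra hom. -/
noncomputable def epsAH : A →ₐ[ℂ] ℂ := Bialgebra.counitAlgHom ℂ A

/-- `a ⊗ b ↦ ε a • b` as an algebra hom. -/
noncomputable def F1h : A ⊗[ℂ] A →ₐ[ℂ] A :=
  (Algebra.TensorProduct.lid ℂ A).toAlgHom.comp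
    (Algebra.TensorProduct.map epsAH (AlgHom.id ℂ A))

@[simp] lemma F1h_tmul (a b : A) : F1h (a ⊗ₜ b) = Coalgebra.counit (R := ℂ) a • b := by
  simp [F1h, epsAH]

lemma F1h_eq (X : A ⊗[ℂ] A) : F1h X = F1lin X := by
  induction X using TensorProduct.induction_on with
  | zero => simp
  | tmul a b => simp
  | add X Y h1 h2 => simp only [map_add, h1, h2]

/-- `a ⊗ b ↦ ε b • a` as an algebra hom. -/
noncomputable def F2h : A ⊗[ℂ] A →ₐ[ℂ] A :=
  (Algebra.TensorProduct.rid ℂ ℂ A).toAlgHom.comp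
    (Algebra.TensorProduct.map (AlgHom.id ℂ A) epsAH)

@[simp] lemma F2h_tmul (a b : A) : F2h (a ⊗ₜ b) = Coalgebra.counit (R := ℂ) b • a := by
  simp [F2h, epsAH]

lemma F2h_eq (X : A ⊗[ℂ] A) : F2h X = F2lin X := by
  induction X using TensorProduct.induction_on with
  | zero => simp
  | tmul a b => simp
  | add X Y h1 h2 => simp only [map_add, h1, h2]

noncomputable def G1h : (A ⊗[ℂ] A) ⊗[ℂ] A →ₐ[ℂ] A ⊗[ℂ] A :=
  Algebra.TensorProduct.map F1h (AlgHom.id ℂ A)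

lemma G1h_comul (X : A ⊗[ℂ] A) :
    G1h ((TensorProduct.map (Coalgebra.comul (R := ℂ)) LinearMap.id) X) = X := by
  induction X using TensorProduct.induction_on with
  | zero => simp
  | tmul a b => simp [G1h, F1h_eq, F1lin_comul]
  | add X Y h1 h2 => simp only [map_add, h1, h2]

lemma G1h_incLeft (X : A ⊗[ℂ] A) :
    G1h ((Algebra.TensorProduct.map (includeLeft (S := ℂ)) (AlgHom.id ℂ A)) X) =
      (1 : A) ⊗ₜ F1lin X := by
  induction X using TensorProduct.induction_on with
  | zero => simp
  | tmul a b => simp [G1h, TensorProduct.smul_tmul, TensorProduct.tmul_smul]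
  | add X Y h1 h2 => simp only [map_add, h1, h2, TensorProduct.tmul_add]

lemma G1h_incRight (X : A ⊗[ℂ] A) :
    G1h ((Algebra.TensorProduct.map (includeRight (R := ℂ) (A := A)) (AlgHom.id ℂ A)) X)
      = X := by
  induction X using TensorProduct.induction_on with
  | zero => simp
  | tmul a b => simp [G1h]
  | add X Y h1 h2 => simp only [map_add, h1, h2]

end Main
section Main2

variable {A : Type*} [Ring A] [HopfAlgebra ℂ A]
local notation "S°" => HopfAlgebra.antipode (R := ℂ)
local notation "μ°" => LinearMap.mul' ℂ A
open Algebra.TensorProduct (includeLeft includeRight)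

noncomputable def Xih : (A ⊗[ℂ] A) ⊗[ℂ] A ≃ₐ[ℂ] A ⊗[ℂ] (A ⊗[ℂ] A) :=
  Algebra.TensorProduct.assoc ℂ ℂ ℂ A A A

lemma Xih_apply (z : (A ⊗[ℂ] A) ⊗[ℂ] A) :
    (Xih z : A ⊗[ℂ] (A ⊗[ℂ] A)) = (TensorProduct.assoc ℂ A A A) z := by
  induction z using TensorProduct.induction_on with
  | zero => simp
  | tmul w c =>
    induction w using TensorProduct.induction_on with
    | zero => simp only [TensorProduct.zero_tmul, map_zero]
    | tmul a b => simp [Xih]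
    | add w1 w2 h1 h2 => simp only [TensorProduct.add_tmul, map_add, h1, h2]
  | add z1 z2 h1 h2 => simp only [map_add, h1, h2]

noncomputable def H2h : A ⊗[ℂ] (A ⊗[ℂ] A) →ₐ[ℂ] A ⊗[ℂ] A :=
  Algebra.TensorProduct.map (AlgHom.id ℂ A) F1h

lemma H2h_mapidcomul (X : A ⊗[ℂ] A) :
    H2h ((TensorProduct.map LinearMap.id (Coalgebra.comul (R := ℂ))) X) = X := by
  induction X using TensorProduct.induction_on with
  | zero => simp
  | tmul a b => simp [H2h, F1h_eq, F1lin_comul]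
  | add X Y h1 h2 => simp only [map_add, h1, h2]

lemma H2h_Xih_incLeftMap (X : A ⊗[ℂ] A) :
    H2h ((TensorProduct.assoc ℂ A A A)
      ((Algebra.TensorProduct.map (includeLeft (S := ℂ)) (AlgHom.id ℂ A)) X)) = X := by
  induction X using TensorProduct.induction_on with
  | zero => simp
  | tmul a b => simp [H2h]
  | add X Y h1 h2 => simp only [map_add, h1, h2]

lemma H2h_Xih_incLeft (X : A ⊗[ℂ] A) :
    H2h ((TensorProduct.assoc ℂ A A A)
        ((Algebra.TensorProduct.includeLeft (R := ℂ) (S := ℂ) (A := A ⊗[ℂ] A) (B := A)) X))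
      = (F2lin X) ⊗ₜ (1 : A) := by
  induction X using TensorProduct.induction_on with
  | zero => simp
  | tmul a b =>
    simp [H2h, TensorProduct.smul_tmul, TensorProduct.tmul_smul]
  | add X Y h1 h2 => simp only [map_add, h1, h2, TensorProduct.add_tmul]

section WithR
variable {R Rinv : A ⊗[ℂ] A}

lemma L1 (hRinv : R * Rinv = 1 ∧ Rinv * R = 1)
    (hqt1 : (TensorProduct.map (Coalgebra.comul (R := ℂ)) LinearMap.id) R =
        (Algebra.TensorProduct.map (Algebra.TensorProduct.includeLeft (S := ℂ)) (AlgHom.id ℂ A)) R *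
        (Algebra.TensorProduct.map (Algebra.TensorProduct.includeRight) (AlgHom.id ℂ A)) R) :
    F1lin R = 1 := by
  have h := congrArg G1h hqt1
  rw [map_mul, G1h_comul, G1h_incLeft, G1h_incRight] at h
  have h2 : ((1 : A) ⊗ₜ[ℂ] F1lin R) = 1 := by
    calc (1 : A) ⊗ₜ[ℂ] F1lin R = ((1 : A) ⊗ₜ[ℂ] F1lin R) * (R * Rinv) := by
          rw [hRinv.1, mul_one]
      _ = R * Rinv := by rw [← mul_assoc, ← h]
      _ = 1 := hRinv.1
  have h3 := congrArg F1lin h2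
  simpa [Algebra.TensorProduct.one_def] using h3

lemma L2 (hRinv : R * Rinv = 1 ∧ Rinv * R = 1)
    (hqt2 : ((TensorProduct.assoc ℂ A A A).symm.toLinearMap)
        ((TensorProduct.map LinearMap.id (Coalgebra.comul (R := ℂ))) R) =
        (Algebra.TensorProduct.map (Algebra.TensorProduct.includeLeft (S := ℂ)) (AlgHom.id ℂ A)) R *
        (Algebra.TensorProduct.includeLeft (R := ℂ) (S := ℂ) (A := A ⊗[ℂ] A) (B := A)) R) :
    F2lin R = 1 := by
  -- transform hqt2
  have h0 := congrArg (fun z => (Xih (A := A)) z) hqt2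
  simp only [Xih_apply, map_mul] at h0
  rw [LinearEquiv.coe_toLinearMap, LinearEquiv.apply_symm_apply] at h0
  -- h0 : map id comul R = Xih (mapL R) * Xih (incLeft R)
  have h := congrArg H2h h0
  rw [map_mul, H2h_mapidcomul, H2h_Xih_incLeftMap, H2h_Xih_incLeft] at h
  have h2 : ((F2lin R) ⊗ₜ[ℂ] (1 : A)) = 1 := by
    calc (F2lin R) ⊗ₜ[ℂ] (1 : A) = (Rinv * R) * ((F2lin R) ⊗ₜ[ℂ] (1 : A)) := by
          rw [hRinv.2, one_mul]
      _ = Rinv * R := by rw [mul_assoc, ← h]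
      _ = 1 := hRinv.2
  have h3 := congrArg F2lin h2
  simpa [Algebra.TensorProduct.one_def] using h3

end WithR
end Main2
section Main3
variable {A : Type*} [Ring A] [HopfAlgebra ℂ A]
open Algebra.TensorProduct (includeLeft includeRight)

/-- `(A⊗A)⊗A → A⊗A`, `(a⊗b)⊗c ↦ (S a * b) ⊗ c` -/
noncomputable def Jm : (A ⊗[ℂ] A) ⊗[ℂ] A →ₗ[ℂ] A ⊗[ℂ] A :=
  TensorProduct.map ((LinearMap.mul' ℂ A) ∘ₗ (HopfAlgebra.antipode (R := ℂ)).rTensor A)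
    LinearMap.id

@[simp] lemma Jm_tmul (w : A ⊗[ℂ] A) (c : A) :
    Jm (w ⊗ₜ c) =
      ((LinearMap.mul' ℂ A) ((HopfAlgebra.antipode (R := ℂ)).rTensor A w)) ⊗ₜ c := by simp [Jm]

lemma Jm_comul (X : A ⊗[ℂ] A) :
    Jm ((TensorProduct.map (Coalgebra.comul (R := ℂ)) LinearMap.id) X) =
      (1 : A) ⊗ₜ F1lin X := by
  induction X using TensorProduct.induction_on with
  | zero => simp
  | tmul a b =>
    simp [Algebra.algebraMap_eq_smul_one, TensorProduct.smul_tmul, TensorProduct.tmul_smul]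
  | add X Y h1 h2 => simp only [map_add, h1, h2, TensorProduct.tmul_add]

lemma Jm_prod (X Y : A ⊗[ℂ] A) :
    Jm ((Algebra.TensorProduct.map (includeLeft (S := ℂ)) (AlgHom.id ℂ A)) X *
        (Algebra.TensorProduct.map (includeRight (R := ℂ) (A := A)) (AlgHom.id ℂ A)) Y) =
      ((HopfAlgebra.antipode (R := ℂ)).rTensor A X) * Y := by
  induction X using TensorProduct.induction_on with
  | zero => simp
  | tmul a b =>
    induction Y using TensorProduct.induction_on with
    | zero => simp
    | tmul c d =>
      simp [Algebra.TensorProduct.tmul_mul_tmul]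
    | add Y1 Y2 h1 h2 => simp only [map_add, mul_add, h1, h2]
  | add X1 X2 h1 h2 => simp only [map_add, add_mul, h1, h2]

/-- `A⊗(A⊗A) → A⊗A`, `a⊗(b⊗c) ↦ a ⊗ (b * S c)` -/
noncomputable def K2m : A ⊗[ℂ] (A ⊗[ℂ] A) →ₗ[ℂ] A ⊗[ℂ] A :=
  TensorProduct.map LinearMap.id
    ((LinearMap.mul' ℂ A) ∘ₗ (HopfAlgebra.antipode (R := ℂ)).lTensor A)

@[simp] lemma K2m_tmul (a : A) (w : A ⊗[ℂ] A) :
    K2m (a ⊗ₜ w) =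
      a ⊗ₜ ((LinearMap.mul' ℂ A) ((HopfAlgebra.antipode (R := ℂ)).lTensor A w)) := by simp [K2m]

lemma K2m_mapidcomul (X : A ⊗[ℂ] A) :
    K2m ((TensorProduct.map LinearMap.id (Coalgebra.comul (R := ℂ))) X) =
      F2lin X ⊗ₜ (1 : A) := by
  induction X using TensorProduct.induction_on with
  | zero => simp
  | tmul a b =>
    simp [Algebra.algebraMap_eq_smul_one, TensorProduct.smul_tmul, TensorProduct.tmul_smul]
  | add X Y h1 h2 => simp only [map_add, h1, h2, TensorProduct.add_tmul]

lemma K2m_prod (X Y : A ⊗[ℂ] A) :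
    K2m (Xih ((Algebra.TensorProduct.includeLeft (R := ℂ) (S := ℂ) (A := A ⊗[ℂ] A) (B := A)) X) *
        Xih ((Algebra.TensorProduct.map (includeLeft (S := ℂ)) (AlgHom.id ℂ A)) Y)) =
      X * ((HopfAlgebra.antipode (R := ℂ)).lTensor A Y) := by
  induction X using TensorProduct.induction_on with
  | zero => simp
  | tmul c d =>
    induction Y using TensorProduct.induction_on with
    | zero => simp
    | tmul a b =>
      simp [Xih, Algebra.TensorProduct.tmul_mul_tmul]
    | add Y1 Y2 h1 h2 => simp only [map_add, mul_add, h1, h2]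
  | add X1 X2 h1 h2 => simp only [map_add, add_mul, h1, h2]

section WithR2
variable {R Rinv : A ⊗[ℂ] A}

lemma L3 (hRinv : R * Rinv = 1 ∧ Rinv * R = 1)
    (hqt1 : (TensorProduct.map (Coalgebra.comul (R := ℂ)) LinearMap.id) R =
        (Algebra.TensorProduct.map (Algebra.TensorProduct.includeLeft (S := ℂ)) (AlgHom.id ℂ A)) R *
        (Algebra.TensorProduct.map (Algebra.TensorProduct.includeRight) (AlgHom.id ℂ A)) R) :
    (HopfAlgebra.antipode (R := ℂ)).rTensor A R = Rinv := by
  have h := congrArg Jm hqt1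
  rw [Jm_comul, Jm_prod, L1 hRinv hqt1] at h
  have h1 : ((HopfAlgebra.antipode (R := ℂ)).rTensor A R) * R = 1 := by
    rw [← h, Algebra.TensorProduct.one_def]
  calc (HopfAlgebra.antipode (R := ℂ)).rTensor A R
      = ((HopfAlgebra.antipode (R := ℂ)).rTensor A R) * (R * Rinv) := by rw [hRinv.1, mul_one]
    _ = Rinv := by rw [← mul_assoc, h1, one_mul]

lemma L4 (hRinv : R * Rinv = 1 ∧ Rinv * R = 1)
    (hqt1 : (TensorProduct.map (Coalgebra.comul (R := ℂ)) LinearMap.id) R =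
        (Algebra.TensorProduct.map (Algebra.TensorProduct.includeLeft (S := ℂ)) (AlgHom.id ℂ A)) R *
        (Algebra.TensorProduct.map (Algebra.TensorProduct.includeRight) (AlgHom.id ℂ A)) R)
    (hqt2 : ((TensorProduct.assoc ℂ A A A).symm.toLinearMap)
        ((TensorProduct.map LinearMap.id (Coalgebra.comul (R := ℂ))) R) =
        (Algebra.TensorProduct.map (Algebra.TensorProduct.includeLeft (S := ℂ)) (AlgHom.id ℂ A)) R *
        (Algebra.TensorProduct.includeLeft (R := ℂ) (S := ℂ) (A := A ⊗[ℂ] A) (B := A)) R) :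
    (HopfAlgebra.antipode (R := ℂ)).lTensor A Rinv = R := by
  have hPhi : ∀ X : A ⊗[ℂ] A,
      (Algebra.TensorProduct.map (AlgHom.id ℂ A) (Bialgebra.comulAlgHom ℂ A)) X =
        (TensorProduct.map LinearMap.id (Coalgebra.comul (R := ℂ))) X := by
    intro X
    induction X using TensorProduct.induction_on with
    | zero => simp
    | tmul a b => simp [Bialgebra.comulAlgHom]
    | add X Y h1 h2 => simp only [map_add, h1, h2]
  set Φh := Algebra.TensorProduct.map (AlgHom.id ℂ A) (Bialgebra.comulAlgHom ℂ A) with hΦh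
  set lm := Algebra.TensorProduct.map (includeLeft (R := ℂ) (S := ℂ) (A := A) (B := A)) (AlgHom.id ℂ A) with hlm
  set il := Algebra.TensorProduct.includeLeft (R := ℂ) (S := ℂ) (A := A ⊗[ℂ] A) (B := A) with hil
  have h0 := congrArg (fun z => (Xih (A := A)) z) hqt2
  simp only [map_mul] at h0
  rw [Xih_apply, LinearEquiv.coe_toLinearMap, LinearEquiv.apply_symm_apply] at h0
  have hΦR : Φh R = Xih (lm R) * Xih (il R) := by rw [hPhi]; exact h0
  have hP : Xih (lm R) * Xih (lm Rinv) = 1 := by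
    rw [← map_mul, ← map_mul, hRinv.1, map_one, map_one]
  have hQ : Xih (il R) * Xih (il Rinv) = 1 := by
    rw [← map_mul, ← map_mul, hRinv.1, map_one, map_one]
  have hPhiRinvR : Φh Rinv * Φh R = 1 := by
    rw [← map_mul, hRinv.2, map_one]
  have hkey : Φh Rinv = Xih (il Rinv) * Xih (lm Rinv) := by
    have h1 : (Xih (lm R) * Xih (il R)) * (Xih (il Rinv) * Xih (lm Rinv)) = 1 := by
      rw [mul_assoc, ← mul_assoc (Xih (il R)), hQ, one_mul, hP]
    calc Φh Rinv
        = Φh Rinv * ((Xih (lm R) * Xih (il R)) * (Xih (il Rinv) * Xih (lm Rinv))) := by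
          rw [h1, mul_one]
      _ = (Φh Rinv * Φh R) * (Xih (il Rinv) * Xih (lm Rinv)) := by
          rw [hΦR]; simp only [mul_assoc]
      _ = Xih (il Rinv) * Xih (lm Rinv) := by rw [hPhiRinvR, one_mul]
  have h2 := congrArg K2m hkey
  rw [hΦh, hPhi, K2m_mapidcomul, hil, hlm, K2m_prod] at h2
  have hF2Rinv : F2lin Rinv = 1 := by
    have hh : F2h (R * Rinv) = 1 := by rw [hRinv.1, map_one]
    rw [map_mul, F2h_eq, F2h_eq, L2 hRinv hqt2, one_mul] at hh
    exact hh
  rw [hF2Rinv] at h2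
  have h3 : Rinv * ((HopfAlgebra.antipode (R := ℂ)).lTensor A Rinv) = 1 := by
    rw [← h2, Algebra.TensorProduct.one_def]
  calc (HopfAlgebra.antipode (R := ℂ)).lTensor A Rinv
      = (R * Rinv) * ((HopfAlgebra.antipode (R := ℂ)).lTensor A Rinv) := by rw [hRinv.1, one_mul]
    _ = R := by rw [mul_assoc, h3, mul_one]

end WithR2
end Main3
section Main4
variable {A : Type*} [Ring A] [HopfAlgebra ℂ A]

/-- `c ⊗ d ↦ S d * c` -/
noncomputable def Gm : A ⊗[ℂ] A →ₗ[ℂ] A :=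
  (LinearMap.mul' ℂ A) ∘ₗ (TensorProduct.map (HopfAlgebra.antipode (R := ℂ)) LinearMap.id)
    ∘ₗ (TensorProduct.comm ℂ A A).toLinearMap

@[simp] lemma Gm_tmul (c d : A) :
    Gm (c ⊗ₜ d) = (HopfAlgebra.antipode (R := ℂ) d) * c := by simp [Gm]

lemma Gm_one : Gm (1 : A ⊗[ℂ] A) = 1 := by
  rw [Algebra.TensorProduct.one_def, Gm_tmul, antipode_one', one_mul]

lemma p1 (C X : A ⊗[ℂ] A) :
    Gm ((TensorProduct.comm ℂ A A) C * X) =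
      Gm (((LinearMap.mul' ℂ A ((HopfAlgebra.antipode (R := ℂ)).rTensor A C)) ⊗ₜ (1:A)) * X) := by
  induction C using TensorProduct.induction_on with
  | zero => simp
  | tmul a b =>
    induction X using TensorProduct.induction_on with
    | zero => simp
    | tmul c d =>
      simp [Algebra.TensorProduct.tmul_mul_tmul, antipode_mul, mul_assoc]
    | add X1 X2 h1 h2 => simp only [mul_add, map_add, h1, h2]
  | add C1 C2 h1 h2 =>
    simp only [map_add, add_mul, TensorProduct.add_tmul, h1, h2]

lemma p2 (C X : A ⊗[ℂ] A) :
    Gm (X * C) = Gm ((Gm X ⊗ₜ (1:A)) * C) := by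
  induction C using TensorProduct.induction_on with
  | zero => simp
  | tmul a b =>
    induction X using TensorProduct.induction_on with
    | zero => simp
    | tmul c d =>
      simp [Algebra.TensorProduct.tmul_mul_tmul, antipode_mul, mul_assoc]
    | add X1 X2 h1 h2 => simp only [map_add, add_mul, TensorProduct.add_tmul, h1, h2]
  | add C1 C2 h1 h2 => simp only [mul_add, map_add, h1, h2]

section WithR3
variable {R Rinv : A ⊗[ℂ] A}

lemma star_lemma
    (hqt0 : ∀ ξ : A, (TensorProduct.comm ℂ A A) (Coalgebra.comul (R := ℂ) ξ) * R
        = R * Coalgebra.comul (R := ℂ) ξ) (ξ : A) :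
    Gm ((Gm R ⊗ₜ (1:A)) * Coalgebra.comul (R := ℂ) ξ) = Coalgebra.counit (R := ℂ) ξ • Gm R := by
  have h := congrArg Gm (hqt0 ξ)
  rw [p1] at h
  rw [p2 (Coalgebra.comul (R := ℂ) ξ) R] at h
  rw [← h, mul_antipode_rTensor_comul_apply, Algebra.algebraMap_eq_smul_one]
  have : ((Coalgebra.counit (R := ℂ) ξ • (1:A)) ⊗ₜ (1:A) : A ⊗[ℂ] A)
      = Coalgebra.counit (R := ℂ) ξ • 1 := by
    rw [Algebra.TensorProduct.one_def, TensorProduct.smul_tmul']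
  rw [this, smul_mul_assoc, one_mul, map_smul]

/-- `Tu w = Gm ((u ⊗ 1) * w)` as a linear map, where `u = Gm R`. -/
noncomputable def Tu (R : A ⊗[ℂ] A) : A ⊗[ℂ] A →ₗ[ℂ] A :=
  Gm ∘ₗ LinearMap.mulLeft ℂ ((Gm R) ⊗ₜ (1:A))

@[simp] lemma Tu_apply (w : A ⊗[ℂ] A) : Tu R w = Gm (((Gm R) ⊗ₜ (1:A)) * w) := rfl

/-- the map `Pm : (A⊗A)⊗A →ₗ A`, `w ⊗ c ↦ S (S c) * Tu w`. -/
noncomputable def Pm (R : A ⊗[ℂ] A) : (A ⊗[ℂ] A) ⊗[ℂ] A →ₗ[ℂ] A :=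
  (LinearMap.mul' ℂ A) ∘ₗ
    (TensorProduct.map ((HopfAlgebra.antipode (R := ℂ)) ∘ₗ (HopfAlgebra.antipode (R := ℂ))) (Tu R))
    ∘ₗ (TensorProduct.comm ℂ (A ⊗[ℂ] A) A).toLinearMap

@[simp] lemma Pm_tmul (w : A ⊗[ℂ] A) (c : A) :
    Pm R (w ⊗ₜ c) = HopfAlgebra.antipode (R := ℂ) (HopfAlgebra.antipode (R := ℂ) c) * Tu R w := by
  simp [Pm]

lemma Pm_assoc_symm (a : A) (w : A ⊗[ℂ] A) :
    Pm R ((TensorProduct.assoc ℂ A A A).symm (a ⊗ₜ w)) =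
      HopfAlgebra.antipode (R := ℂ)
        (LinearMap.mul' ℂ A ((HopfAlgebra.antipode (R := ℂ)).lTensor A w)) * Gm R * a := by
  induction w using TensorProduct.induction_on with
  | zero => simp
  | tmul b c =>
    rw [TensorProduct.assoc_symm_tmul, Pm_tmul, Tu_apply]
    simp [Algebra.TensorProduct.tmul_mul_tmul, antipode_mul, mul_assoc]
  | add w1 w2 h1 h2 =>
    simp only [TensorProduct.tmul_add, map_add, h1, h2, add_mul]

lemma Pm_lTensor_comul
    (hqt0 : ∀ ξ : A, (TensorProduct.comm ℂ A A) (Coalgebra.comul (R := ℂ) ξ) * R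
        = R * Coalgebra.comul (R := ℂ) ξ) (C : A ⊗[ℂ] A) :
    Pm R ((TensorProduct.assoc ℂ A A A).symm ((Coalgebra.comul (R := ℂ)).lTensor A C)) =
      Gm R * F2lin C := by
  induction C using TensorProduct.induction_on with
  | zero => simp
  | tmul a y =>
    rw [LinearMap.lTensor_tmul, Pm_assoc_symm, mul_antipode_lTensor_comul_apply]
    simp [Algebra.algebraMap_eq_smul_one, antipode_one', smul_mul_assoc, mul_smul_comm]
  | add C1 C2 h1 h2 => simp only [map_add, h1, h2, mul_add]

lemma Pm_rTensor_comul
    (hqt0 : ∀ ξ : A, (TensorProduct.comm ℂ A A) (Coalgebra.comul (R := ℂ) ξ) * R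
        = R * Coalgebra.comul (R := ℂ) ξ) (C : A ⊗[ℂ] A) :
    Pm R ((Coalgebra.comul (R := ℂ)).rTensor A C) =
      HopfAlgebra.antipode (R := ℂ) (HopfAlgebra.antipode (R := ℂ) (F1lin C)) * Gm R := by
  induction C using TensorProduct.induction_on with
  | zero => simp
  | tmul y z =>
    rw [LinearMap.rTensor_tmul, Pm_tmul, Tu_apply, star_lemma hqt0]
    simp [smul_mul_assoc, mul_smul_comm]
  | add C1 C2 h1 h2 => simp only [map_add, h1, h2, add_mul]

/-- Key commutation: `u ξ = S²(ξ) u`. -/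
lemma step1
    (hqt0 : ∀ ξ : A, (TensorProduct.comm ℂ A A) (Coalgebra.comul (R := ℂ) ξ) * R
        = R * Coalgebra.comul (R := ℂ) ξ) (ξ : A) :
    Gm R * ξ = HopfAlgebra.antipode (R := ℂ) (HopfAlgebra.antipode (R := ℂ) ξ) * Gm R := by
  have h1 := Pm_lTensor_comul (R := R) hqt0 (Coalgebra.comul (R := ℂ) ξ)
  rw [Coalgebra.coassoc_symm_apply, Pm_rTensor_comul hqt0, F1lin_comul, F2lin_comul] at h1
  exact h1.symm

end WithR3
end Main4

section Main5
variable {A : Type*} [Ring A] [HopfAlgebra ℂ A]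

/-- `a ⊗ b ↦ S b * S (S a)` -/
noncomputable def Mm : A ⊗[ℂ] A →ₗ[ℂ] A :=
  (LinearMap.mul' ℂ A) ∘ₗ
    (TensorProduct.map (HopfAlgebra.antipode (R := ℂ))
      ((HopfAlgebra.antipode (R := ℂ)) ∘ₗ (HopfAlgebra.antipode (R := ℂ))))
    ∘ₗ (TensorProduct.comm ℂ A A).toLinearMap

@[simp] lemma Mm_tmul (a b : A) :
    Mm (a ⊗ₜ b) = HopfAlgebra.antipode (R := ℂ) b *
      HopfAlgebra.antipode (R := ℂ) (HopfAlgebra.antipode (R := ℂ) a) := by simp [Mm]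

/-- `a ⊗ b ↦ b * S (S a)` -/
noncomputable def Wm : A ⊗[ℂ] A →ₗ[ℂ] A :=
  (LinearMap.mul' ℂ A) ∘ₗ
    (TensorProduct.map LinearMap.id
      ((HopfAlgebra.antipode (R := ℂ)) ∘ₗ (HopfAlgebra.antipode (R := ℂ))))
    ∘ₗ (TensorProduct.comm ℂ A A).toLinearMap

@[simp] lemma Wm_tmul (a b : A) :
    Wm (a ⊗ₜ b) = b * HopfAlgebra.antipode (R := ℂ) (HopfAlgebra.antipode (R := ℂ) a) := by
  simp [Wm]

section WithR4
variable {R Rinv : A ⊗[ℂ] A}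

lemma Tu_eq_Mm
    (hqt0 : ∀ ξ : A, (TensorProduct.comm ℂ A A) (Coalgebra.comul (R := ℂ) ξ) * R
        = R * Coalgebra.comul (R := ℂ) ξ) (w : A ⊗[ℂ] A) :
    Tu R w = Mm w * Gm R := by
  induction w using TensorProduct.induction_on with
  | zero => simp
  | tmul a b =>
    rw [Tu_apply]
    simp only [Algebra.TensorProduct.tmul_mul_tmul, one_mul, Gm_tmul, Mm_tmul]
    rw [step1 hqt0 a, ← mul_assoc, mul_assoc]
  | add w1 w2 h1 h2 => simp only [map_add, h1, h2, add_mul]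

lemma Tu_SSS
    (hqt0 : ∀ ξ : A, (TensorProduct.comm ℂ A A) (Coalgebra.comul (R := ℂ) ξ) * R
        = R * Coalgebra.comul (R := ℂ) ξ) (w : A ⊗[ℂ] A) :
    Tu R ((HopfAlgebra.antipode (R := ℂ)).rTensor A
        ((HopfAlgebra.antipode (R := ℂ)).lTensor A
          ((HopfAlgebra.antipode (R := ℂ)).rTensor A w))) = Gm R * Wm w := by
  induction w using TensorProduct.induction_on with
  | zero => simp
  | tmul a b =>
    rw [LinearMap.rTensor_tmul, LinearMap.lTensor_tmul, LinearMap.rTensor_tmul, Tu_apply]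
    simp only [Algebra.TensorProduct.tmul_mul_tmul, one_mul, Gm_tmul, Wm_tmul]
    rw [← mul_assoc, ← step1 hqt0 b, mul_assoc]
  | add w1 w2 h1 h2 => simp only [map_add, h1, h2, mul_add]

lemma left_inverse
    (hRinv : R * Rinv = 1 ∧ Rinv * R = 1)
    (hqt0 : ∀ ξ : A, (TensorProduct.comm ℂ A A) (Coalgebra.comul (R := ℂ) ξ) * R
        = R * Coalgebra.comul (R := ℂ) ξ) :
    Mm Rinv * Gm R = 1 := by
  have h := p2 Rinv R
  rw [hRinv.1, Gm_one] at h
  rw [← Tu_eq_Mm hqt0, Tu_apply, ← h]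

lemma right_inverse
    (hRinv : R * Rinv = 1 ∧ Rinv * R = 1)
    (hqt0 : ∀ ξ : A, (TensorProduct.comm ℂ A A) (Coalgebra.comul (R := ℂ) ξ) * R
        = R * Coalgebra.comul (R := ℂ) ξ)
    (hqt1 : (TensorProduct.map (Coalgebra.comul (R := ℂ)) LinearMap.id) R =
        (Algebra.TensorProduct.map (Algebra.TensorProduct.includeLeft (S := ℂ)) (AlgHom.id ℂ A)) R *
        (Algebra.TensorProduct.map (Algebra.TensorProduct.includeRight) (AlgHom.id ℂ A)) R)
    (hqt2 : ((TensorProduct.assoc ℂ A A A).symm.toLinearMap)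
        ((TensorProduct.map LinearMap.id (Coalgebra.comul (R := ℂ))) R) =
        (Algebra.TensorProduct.map (Algebra.TensorProduct.includeLeft (S := ℂ)) (AlgHom.id ℂ A)) R *
        (Algebra.TensorProduct.includeLeft (R := ℂ) (S := ℂ) (A := A ⊗[ℂ] A) (B := A)) R) :
    Gm R * Wm R = 1 := by
  have h := p2 Rinv R
  rw [hRinv.1, Gm_one] at h
  -- Tu R Rinv = 1
  have hTu : Tu R Rinv = 1 := by rw [Tu_apply, ← h]
  have hsub : (HopfAlgebra.antipode (R := ℂ)).rTensor A
      ((HopfAlgebra.antipode (R := ℂ)).lTensor A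
        ((HopfAlgebra.antipode (R := ℂ)).rTensor A R)) = Rinv := by
    rw [L3 hRinv hqt1, L4 hRinv hqt1 hqt2]
    exact L3 hRinv hqt1
  rw [← Tu_SSS hqt0 R, hsub, hTu]

end WithR4
end Main5

end DrinfeldAux

open TensorProduct

/-- In a quasi-triangular Hopf algebra, the Drinfeld element
`u = Σ S(r²_σ) r¹_σ` is invertible and implements the square of the antipode:
`S²(ξ) = u ξ u⁻¹` for all `ξ`. -/
theorem drinfeld_u_implements_antipode_squared
    (A : Type*) [Ring A] [HopfAlgebra ℂ A]
    (R Rinv : A ⊗[ℂ] A)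
    (hRinv : R * Rinv = 1 ∧ Rinv * R = 1)
    (hqt0 : ∀ ξ : A, (TensorProduct.comm ℂ A A) (Coalgebra.comul (R := ℂ) ξ) * R
        = R * Coalgebra.comul (R := ℂ) ξ)
    (hqt1 : (TensorProduct.map (Coalgebra.comul (R := ℂ)) LinearMap.id) R =
        (Algebra.TensorProduct.map (Algebra.TensorProduct.includeLeft (S := ℂ)) (AlgHom.id ℂ A)) R *
        (Algebra.TensorProduct.map (Algebra.TensorProduct.includeRight) (AlgHom.id ℂ A)) R)
    (hqt2 : ((TensorProduct.assoc ℂ A A A).symm.toLinearMap)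
        ((TensorProduct.map LinearMap.id (Coalgebra.comul (R := ℂ))) R) =
        (Algebra.TensorProduct.map (Algebra.TensorProduct.includeLeft (S := ℂ)) (AlgHom.id ℂ A)) R *
        (Algebra.TensorProduct.includeLeft (R := ℂ) (S := ℂ) (A := A ⊗[ℂ] A) (B := A)) R) :
    ∃ uinv : A,
      (LinearMap.mul' ℂ A
          ((TensorProduct.map (HopfAlgebra.antipode (R := ℂ)) LinearMap.id)
            ((TensorProduct.comm ℂ A A) R))) * uinv = 1 ∧
      uinv * (LinearMap.mul' ℂ A
          ((TensorProduct.map (HopfAlgebra.antipode (R := ℂ)) LinearMap.id)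
            ((TensorProduct.comm ℂ A A) R))) = 1 ∧
      ∀ ξ : A,
        HopfAlgebra.antipode (R := ℂ) (HopfAlgebra.antipode (R := ℂ) ξ) =
          (LinearMap.mul' ℂ A
            ((TensorProduct.map (HopfAlgebra.antipode (R := ℂ)) LinearMap.id)
              ((TensorProduct.comm ℂ A A) R))) * ξ * uinv := by
  have hu : (LinearMap.mul' ℂ A
      ((TensorProduct.map (HopfAlgebra.antipode (R := ℂ)) LinearMap.id)
        ((TensorProduct.comm ℂ A A) R))) = DrinfeldAux.Gm R := rfl
  rw [hu]
  have hright : DrinfeldAux.Gm R * DrinfeldAux.Wm R = 1 :=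
    DrinfeldAux.right_inverse hRinv hqt0 hqt1 hqt2
  have hleft : DrinfeldAux.Mm Rinv * DrinfeldAux.Gm R = 1 :=
    DrinfeldAux.left_inverse hRinv hqt0
  have huinv : DrinfeldAux.Wm R * DrinfeldAux.Gm R = 1 := by
    have : DrinfeldAux.Mm Rinv = DrinfeldAux.Wm R := by
      calc DrinfeldAux.Mm Rinv
          = DrinfeldAux.Mm Rinv * (DrinfeldAux.Gm R * DrinfeldAux.Wm R) := by
            rw [hright, mul_one]
        _ = (DrinfeldAux.Mm Rinv * DrinfeldAux.Gm R) * DrinfeldAux.Wm R := by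
            rw [mul_assoc]
        _ = DrinfeldAux.Wm R := by rw [hleft, one_mul]
    rw [← this, hleft]
  refine ⟨DrinfeldAux.Wm R, hright, huinv, fun ξ => ?_⟩
  rw [DrinfeldAux.step1 hqt0 ξ, mul_assoc, hright, mul_one]
end

section
/- With S and fusion rules as in the Verlinde setup, for each label J the assignment ϑ^J(c^I) = S_{IJ}/(N d_J) defines a one-dimensional representation (algebra homomorphism to ℂ) of the fusion algebra, and these exhaust all its irreducible representations; in particular ϑ^J(c^I c^K) = ϑ^J(c^I) ϑ^J(c^K). -/
open scoped BigOperators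

/-- For each label `J`, the assignment `ϑ^J(c^I) = S_{IJ}/(N d_J)` defines a
one-dimensional representation (an algebra homomorphism to `ℂ`) of the fusion algebra, these
exhaust all irreducible representations (characters), and in particular
`ϑ^J(c^I c^K) = ϑ^J(c^I) ϑ^J(c^K)`. -/
theorem verlinde_characters
    (Λ : Type*) [Fintype Λ] [DecidableEq Λ]
    (zero : Λ)
    (Nf : Λ → Λ → Λ → ℕ)
    (S : Λ → Λ → ℂ) (d : Λ → ℝ) (N : ℝ)
    (A : Type*) [CommRing A] [Algebra ℂ A]
    (c : Λ → A)
    (b : Module.Basis Λ ℂ A) (hb : ∀ I, b I = c I)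
    (hmul : ∀ I J, c I * c J = ∑ K, (Nf I J K : ℂ) • c K)
    (hone : c zero = 1)
    (hd : ∀ K, 0 < d K)
    (hN : N = (Real.sqrt (∑ K, d K ^ 2))⁻¹)
    (hSsymm : ∀ I J, S I J = S J I)
    (hS0 : ∀ J, S zero J = (N : ℂ) * (d J : ℂ))
    (hSunitary : ∀ I K, ∑ J, S I J * (starRingEnd ℂ) (S K J) = if I = K then 1 else 0)
    (hVerlinde : ∀ I J L, ∑ K, (Nf I J K : ℂ) * S K L
        = S I L * S J L / ((N : ℂ) * (d L : ℂ))) :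
    (∀ J : Λ, ∃ φ : A →ₐ[ℂ] ℂ, ∀ I, φ (c I) = S I J / ((N : ℂ) * (d J : ℂ))) ∧
    (∀ φ : A →ₐ[ℂ] ℂ, ∃ J : Λ, ∀ I, φ (c I) = S I J / ((N : ℂ) * (d J : ℂ))) ∧
    (∀ J I K, (∑ L, (Nf I K L : ℂ) * (S L J / ((N : ℂ) * (d J : ℂ))))
        = (S I J / ((N : ℂ) * (d J : ℂ))) * (S K J / ((N : ℂ) * (d J : ℂ)))) := by
  -- positivity of N
  have hsum : 0 < ∑ K, d K ^ 2 := by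
    apply Finset.sum_pos
    · intro i _; exact pow_pos (hd i) 2
    · exact ⟨zero, Finset.mem_univ zero⟩
  have hNpos : 0 < N := by
    rw [hN]; exact inv_pos.mpr (Real.sqrt_pos.mpr hsum)
  have hNd : ∀ J, ((N : ℂ) * (d J : ℂ)) ≠ 0 := by
    intro J
    exact mul_ne_zero (by exact_mod_cast hNpos.ne') (by exact_mod_cast (hd J).ne')
  set θ : Λ → Λ → ℂ := fun J I => S I J / ((N : ℂ) * (d J : ℂ)) with hθ
  -- part 3
  have part3 : ∀ J I K, (∑ L, (Nf I K L : ℂ) * (S L J / ((N : ℂ) * (d J : ℂ))))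
      = (S I J / ((N : ℂ) * (d J : ℂ))) * (S K J / ((N : ℂ) * (d J : ℂ))) := by
    intro J I K
    have h := hVerlinde I K J
    have : (∑ L, (Nf I K L : ℂ) * (S L J / ((N : ℂ) * (d J : ℂ))))
        = (∑ L, (Nf I K L : ℂ) * S L J) / ((N : ℂ) * (d J : ℂ)) := by
      rw [Finset.sum_div]
      exact Finset.sum_congr rfl fun L _ => (mul_div_assoc _ _ _).symm
    rw [this, h]
    rw [div_div, div_mul_div_comm]
  -- part 1
  have part1 : ∀ J : Λ, ∃ φ : A →ₐ[ℂ] ℂ, ∀ I, φ (c I) = S I J / ((N : ℂ) * (d J : ℂ)) := by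
    intro J
    set φ₀ : A →ₗ[ℂ] ℂ := Module.Basis.constr b ℂ (fun I => θ J I) with hφ₀
    have hφc : ∀ I, φ₀ (c I) = θ J I := by
      intro I; rw [← hb]; exact b.constr_basis ℂ _ I
    have hone' : φ₀ 1 = 1 := by
      rw [← hone, hφc, hθ]
      simp only
      rw [hS0 J]
      exact div_self (hNd J)
    have hmul' : ∀ x y : A, φ₀ (x * y) = φ₀ x * φ₀ y := by
      have key : (LinearMap.mul ℂ A).compr₂ φ₀
          = (LinearMap.mul ℂ ℂ).compl₁₂ φ₀ φ₀ := by
        apply b.ext; intro I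
        apply b.ext; intro K
        simp only [LinearMap.compr₂_apply, LinearMap.compl₁₂_apply, LinearMap.mul_apply',
          hb, hφc]
        rw [hmul, map_sum]
        simp only [map_smul, hφc, smul_eq_mul]
        exact part3 J I K
      intro x y
      have := LinearMap.congr_fun (LinearMap.congr_fun key x) y
      simpa using this
    refine ⟨AlgHom.ofLinearMap φ₀ hone' hmul', ?_⟩
    intro I
    exact hφc I
  refine ⟨part1, ?_, part3⟩
  -- part 2
  -- distinctness of characters
  have hrow : ∀ J J', ∑ I, S I J * (starRingEnd ℂ) (S I J') = if J = J' then 1 else 0 := by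
    intro J J'
    have := hSunitary J J'
    simp_rw [hSsymm] at this ⊢
    exact this
  have hθdist : ∀ J J', J ≠ J' → ∃ I, θ J I ≠ θ J' I := by
    intro J J' hne
    by_contra h
    push_neg at h
    have hα : ∀ I, S I J = (((N : ℂ) * (d J : ℂ)) / ((N : ℂ) * (d J' : ℂ))) * S I J' := by
      intro I
      have h2 := h I
      rw [hθ] at h2
      simp only at h2
      rw [div_eq_div_iff (hNd J) (hNd J')] at h2
      rw [div_mul_eq_mul_div, eq_div_iff (hNd J')]
      linear_combination h2
    have h1 : (∑ I, S I J * (starRingEnd ℂ) (S I J')) = 0 := by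
      rw [hrow]; simp [hne]
    have h4 : (∑ I, S I J' * (starRingEnd ℂ) (S I J')) = 1 := by
      rw [hrow]; simp
    have h2 : (∑ I, S I J * (starRingEnd ℂ) (S I J'))
        = (((N : ℂ) * (d J : ℂ)) / ((N : ℂ) * (d J' : ℂ)))
          * ∑ I, S I J' * (starRingEnd ℂ) (S I J') := by
      rw [Finset.mul_sum]
      exact Finset.sum_congr rfl fun I _ => by rw [hα I]; ring
    rw [h4, mul_one, h1] at h2
    have := div_eq_zero_iff.mp h2.symm
    rcases this with h3 | h3
    · exact hNd J h3
    · exact hNd J' h3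
  intro φ
  by_contra hx
  push_neg at hx
  choose Φ hΦ using part1
  choose Ix hIx using hx
  -- family indexed by Option Λ
  set F : Option Λ → (A →ₐ[ℂ] ℂ) := fun o => o.elim φ Φ with hF
  have Finj : Function.Injective F := by
    intro o o' h
    match o, o' with
    | none, none => rfl
    | none, some J =>
        exfalso
        apply hIx J
        have : φ (c (Ix J)) = Φ J (c (Ix J)) := DFunLike.congr_fun h _
        rw [this]; exact hΦ J (Ix J)
    | some J, none =>
        exfalso
        apply hIx J
        have : φ (c (Ix J)) = Φ J (c (Ix J)) := (DFunLike.congr_fun h _).symm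
        rw [this]; exact hΦ J (Ix J)
    | some J, some J' =>
        by_cases hJ : J = J'
        · rw [hJ]
        · exfalso
          obtain ⟨I, hI⟩ := hθdist J J' hJ
          apply hI
          have : Φ J (c I) = Φ J' (c I) := DFunLike.congr_fun h _
          rw [hθ]
          simp only
          rw [← hΦ J I, ← hΦ J' I, this]
  haveI : Module.Finite ℂ A := Module.Finite.of_basis b
  haveI : Module.Free ℂ A := Module.Free.of_basis b
  have li : LinearIndependent ℂ (AlgHom.toLinearMap ∘ F) :=
    (linearIndependent_toLinearMap ℂ A ℂ).comp F Finj
  have hcard := li.fintype_card_le_finrank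
  rw [Module.finrank_linearMap_self] at hcard
  rw [Module.finrank_eq_card_basis b] at hcard
  simp only [Fintype.card_option] at hcard
  omega
end

section
/- The embedded loop algebra image is invariant under the automorphisms i, j of the handle algebra: i(κ_I³ B^I (A^I)^{-1} (B^I)^{-1} A^I) = κ_I³ B^I (A^I)^{-1} (B^I)^{-1} A^I, where i(A^I) = κ_I^{-1} B^I A^I, i(B^I) = B^I (and similarly for j with roles of A and B exchanged). -/
open scoped BigOperators Kronecker

section Aux

variable {n : Type*} [Fintype n] [DecidableEq n] {T : Type*} [Ring T] [Algebra ℂ T]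

private lemma map_smul_mat (Φ : T →ₐ[ℂ] T) (c : ℂ) (M : Matrix n n T) :
    (c • M).map ⇑Φ = c • M.map ⇑Φ := by
  ext i j
  simp [Matrix.map_apply, map_smul]

private lemma map_mul_mat (Φ : T →ₐ[ℂ] T) (M N : Matrix n n T) :
    (M * N).map ⇑Φ = M.map ⇑Φ * N.map ⇑Φ :=
  Matrix.map_mul (f := Φ.toRingHom)

private lemma inv_unique_mat {a b c : Matrix n n T} (hba : b * a = 1) (hac : a * c = 1) :
    b = c := by
  calc b = b * (a * c) := by rw [hac, mul_one]
    _ = (b * a) * c := by rw [mul_assoc]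
    _ = c := by rw [hba, one_mul]

private lemma map_inv_mat (Φ : T →ₐ[ℂ] T) {a ainv b : Matrix n n T}
    (h1 : a * ainv = 1) (h2 : ainv * a = 1)
    (hb : a.map ⇑Φ = b) {binv : Matrix n n T}
    (hbinv1 : b * binv = 1) (hbinv2 : binv * b = 1) :
    ainv.map ⇑Φ = binv := by
  have hmap1 : a.map ⇑Φ * ainv.map ⇑Φ = 1 := by
    rw [← map_mul_mat, h1]
    exact Matrix.map_one _ (map_zero Φ) (map_one Φ)
  rw [hb] at hmap1
  have hmap2 : ainv.map ⇑Φ * a.map ⇑Φ = 1 := by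
    rw [← map_mul_mat, h2]
    exact Matrix.map_one _ (map_zero Φ) (map_one Φ)
  rw [hb] at hmap2
  exact inv_unique_mat hmap2 hbinv1

end Aux

/-- The embedded loop algebra image is invariant under the automorphisms
`i`, `j` of the handle algebra: `i(κ_I³ B^I (A^I)⁻¹ (B^I)⁻¹ A^I) = κ_I³ B^I (A^I)⁻¹ (B^I)⁻¹ A^I`
where `i(A^I) = κ_I⁻¹ B^I A^I`, `i(B^I) = B^I`, and similarly for `j` (with the roles of
`A` and `B` exchanged). -/
theorem embedded_loop_invariant_under_i_j
    (Λ : Type*) (Vι : Λ → Type*) [∀ I, Fintype (Vι I)] [∀ I, DecidableEq (Vι I)]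
    (T : Type*) [Ring T] [Algebra ℂ T]
    (R Rp Rinv : ∀ I J : Λ, Matrix (Vι I × Vι J) (Vι I × Vι J) ℂ)
    (hRp : ∀ I J p q, Rp I J p q = R J I (p.2, p.1) (q.2, q.1))
    (hRinv : ∀ I J, R I J * Rinv I J = 1 ∧ Rinv I J * R I J = 1)
    (κ : Λ → ℂ) (hκ : ∀ I, κ I ≠ 0)
    (MA MB Ainv Binv : ∀ I, Matrix (Vι I) (Vι I) T)
    (hAinv : ∀ I, MA I * Ainv I = 1 ∧ Ainv I * MA I = 1)
    (hBinv : ∀ I, MB I * Binv I = 1 ∧ Binv I * MB I = 1)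
    -- the exchange relation of the AB-algebra
    (hex : ∀ I J, (Rinv I J).map (algebraMap ℂ T) * (MA I ⊗ₖ (1 : Matrix (Vι J) (Vι J) T)) *
        (R I J).map (algebraMap ℂ T) * ((1 : Matrix (Vι I) (Vι I) T) ⊗ₖ MB J)
        = ((1 : Matrix (Vι I) (Vι I) T) ⊗ₖ MB J) * (Rp I J).map (algebraMap ℂ T) *
          (MA I ⊗ₖ (1 : Matrix (Vι J) (Vι J) T)) * (R I J).map (algebraMap ℂ T))
    -- the automorphisms i and j, acting entrywise on the generator matrices
    (Φi Φj : T →ₐ[ℂ] T)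
    (hΦiA : ∀ I, (MA I).map ⇑Φi = (κ I)⁻¹ • (MB I * MA I))
    (hΦiB : ∀ I, (MB I).map ⇑Φi = MB I)
    (hΦjB : ∀ I, (MB I).map ⇑Φj = (κ I)⁻¹ • (MB I * MA I))
    (hΦjA : ∀ I, (MA I).map ⇑Φj = MA I) :
    (∀ I, ((κ I) ^ 3 • (MB I * Ainv I * Binv I * MA I)).map ⇑Φi
        = (κ I) ^ 3 • (MB I * Ainv I * Binv I * MA I)) ∧
    (∀ I, ((κ I) ^ 3 • (MB I * Ainv I * Binv I * MA I)).map ⇑Φj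
        = (κ I) ^ 3 • (MB I * Ainv I * Binv I * MA I)) := by
  have hBAinv : ∀ I, ((κ I)⁻¹ • (MB I * MA I)) * (κ I • (Ainv I * Binv I)) = 1 := by
    intro I
    rw [smul_mul_assoc, mul_smul_comm, smul_smul, inv_mul_cancel₀ (hκ I), one_smul]
    calc MB I * MA I * (Ainv I * Binv I) = MB I * (MA I * Ainv I) * Binv I := by
          noncomm_ring
      _ = 1 := by rw [(hAinv I).1, mul_one, (hBinv I).1]
  have hBAinv' : ∀ I, (κ I • (Ainv I * Binv I)) * ((κ I)⁻¹ • (MB I * MA I)) = 1 := by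
    intro I
    rw [smul_mul_assoc, mul_smul_comm, smul_smul, mul_inv_cancel₀ (hκ I), one_smul]
    calc Ainv I * Binv I * (MB I * MA I) = Ainv I * (Binv I * MB I) * MA I := by
          noncomm_ring
      _ = 1 := by rw [(hBinv I).2, mul_one, (hAinv I).2]
  constructor
  · intro I
    have hiAinv : (Ainv I).map ⇑Φi = κ I • (Ainv I * Binv I) :=
      map_inv_mat Φi (hAinv I).1 (hAinv I).2 (hΦiA I) (hBAinv I) (hBAinv' I)
    have hiBinv : (Binv I).map ⇑Φi = Binv I :=
      map_inv_mat Φi (hBinv I).1 (hBinv I).2 (hΦiB I) (hBinv I).1 (hBinv I).2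
    rw [map_smul_mat, map_mul_mat, map_mul_mat, map_mul_mat, hΦiB I, hiAinv, hiBinv, hΦiA I]
    have hm : MB I * (Ainv I * Binv I) * Binv I * (MB I * MA I)
        = MB I * Ainv I * Binv I * MA I := by
      calc MB I * (Ainv I * Binv I) * Binv I * (MB I * MA I)
          = MB I * Ainv I * (Binv I * (Binv I * MB I)) * MA I := by noncomm_ring
        _ = MB I * Ainv I * Binv I * MA I := by rw [(hBinv I).2, mul_one]
    simp only [smul_mul_assoc, mul_smul_comm, smul_smul, hm]
    congr 1
    simp [inv_mul_cancel₀ (hκ I), mul_inv_cancel₀ (hκ I)]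
  · intro I
    have hjBinv : (Binv I).map ⇑Φj = κ I • (Ainv I * Binv I) :=
      map_inv_mat Φj (hBinv I).1 (hBinv I).2 (hΦjB I) (hBAinv I) (hBAinv' I)
    have hjAinv : (Ainv I).map ⇑Φj = Ainv I :=
      map_inv_mat Φj (hAinv I).1 (hAinv I).2 (hΦjA I) (hAinv I).1 (hAinv I).2
    rw [map_smul_mat, map_mul_mat, map_mul_mat, map_mul_mat, hΦjB I, hjAinv, hjBinv, hΦjA I]
    have hm : MB I * MA I * Ainv I * (Ainv I * Binv I) * MA I
        = MB I * Ainv I * Binv I * MA I := by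
      calc MB I * MA I * Ainv I * (Ainv I * Binv I) * MA I
          = MB I * ((MA I * Ainv I) * Ainv I) * Binv I * MA I := by noncomm_ring
        _ = MB I * Ainv I * Binv I * MA I := by rw [(hAinv I).1, one_mul]
    simp only [smul_mul_assoc, mul_smul_comm, smul_smul, hm]
    congr 1
    simp [inv_mul_cancel₀ (hκ I), mul_inv_cancel₀ (hκ I)]
end
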